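/- If a 2×2 matrix γ over a p-adic Banach algebra has block form [[pA, pB],[C, D]] with ‖A‖,‖B‖,‖C‖,‖D‖ ≤ 1 and D invertible with ‖D^{-1}‖ ≤ 1, and (ηu, u) is a row eigenvector with unit eigenvalue ξ (|ξ| = 1) under the semilinear action v ↦ φ*(v)·γ, then η = (pA·φ*(η) + C)·(pB·φ*(η) + D)^{-1} and ‖η‖ ≤ 1. -/

import Mathlib

/-- If `(ηu, u)` is a row eigenvector with unit eigenvalue `ξ` (`|ξ| = 1`) of the
semilinear Frobenius action `v ↦ φ*(v)·[[pA, pB],[C, D]]`, where `‖A‖,‖B‖,‖C‖,‖D‖ ≤ 1`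
and `D` is invertible with `‖D⁻¹‖ ≤ 1`, then `η = (pA·φ*(η) + C)·(pB·φ*(η) + D)⁻¹`
and `‖η‖ ≤ 1`. -/
theorem unit_eigenvector_eta (p : ℕ) [Fact p.Prime]
    (R : Type*) [NormedCommRing R]
    (hna : ∀ x y : R, ‖x + y‖ ≤ max ‖x‖ ‖y‖)
    (hp : ‖(p : R)‖ = 1 / p)
    (φ : R →+* R) (hφ : ∀ x : R, ‖φ x‖ ≤ ‖x‖)
    (A B C D : R) (hA : ‖A‖ ≤ 1) (hB : ‖B‖ ≤ 1) (hC : ‖C‖ ≤ 1) (hD : ‖D‖ ≤ 1)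
    (Dinv : R) (hDinv : D * Dinv = 1) (hDinvn : ‖Dinv‖ ≤ 1)
    (u uinv : R) (huinv : u * uinv = 1) (hu : ‖u‖ = 1) (huin : ‖uinv‖ = 1)
    (ξ : R) (hξu : IsUnit ξ) (hξ : ‖ξ‖ = 1) (hξinv : ‖Ring.inverse ξ‖ = 1)
    (η : R)
    (heig1 : φ (η * u) * ((p : R) * A) + φ u * C = ξ * (η * u))
    (heig2 : φ (η * u) * ((p : R) * B) + φ u * D = ξ * u) :
    η = ((p : R) * A * φ η + C) * Ring.inverse ((p : R) * B * φ η + D) ∧ ‖η‖ ≤ 1 := by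
  have hζ : ξ * Ring.inverse ξ = 1 := Ring.mul_inverse_cancel ξ hξu
  have hmul : φ (η * u) = φ η * φ u := map_mul φ η u
  have e1 : φ u * ((p : R) * A * φ η + C) = ξ * (η * u) := by
    rw [← heig1, hmul]; ring
  have e2 : φ u * ((p : R) * B * φ η + D) = ξ * u := by
    rw [← heig2, hmul]; ring
  set ζ := Ring.inverse ξ with hζdef
  set M := (p : R) * B * φ η + D with hM
  set P := (p : R) * A * φ η + C with hP
  have hMN : M * (φ u * (uinv * ζ)) = 1 := by
    linear_combination (uinv * ζ) * e2 + (ξ * ζ) * huinv + hζ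
  have hMu : IsUnit M := IsUnit.of_mul_eq_one _ hMN
  have hkey : η * M = P := by
    linear_combination (-(ζ * uinv * M)) * e1 + (ζ * uinv * P) * e2 +
      (-(η * M - P) * ζ * ξ) * huinv + (-(η * M - P)) * hζ
  constructor
  · rw [Ring.eq_mul_inverse_iff_mul_eq _ _ _ hMu]
    exact hkey
  · -- norm bound
    have hφu : ‖φ u‖ ≤ 1 := le_trans (hφ u) (le_of_eq hu)
    have hφη : ‖φ η‖ ≤ ‖η‖ := hφ η
    have hηeq : η = ξ * (η * u) * (uinv * ζ) := by
      linear_combination (-η * ξ * ζ) * huinv + (-η) * hζ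
    have h1 : ‖η‖ ≤ ‖ξ * (η * u)‖ := by
      calc ‖η‖ = ‖ξ * (η * u) * (uinv * ζ)‖ := by rw [← hηeq]
        _ ≤ ‖ξ * (η * u)‖ * ‖uinv * ζ‖ := norm_mul_le _ _
        _ ≤ ‖ξ * (η * u)‖ * (‖uinv‖ * ‖ζ‖) := by
            exact mul_le_mul_of_nonneg_left (norm_mul_le _ _) (norm_nonneg _)
        _ = ‖ξ * (η * u)‖ := by rw [huin, hξinv]; ring
    have hpA : ‖(p : R) * A * φ η‖ ≤ (1 / p) * ‖η‖ := by
      calc ‖(p : R) * A * φ η‖ ≤ ‖(p : R) * A‖ * ‖φ η‖ := norm_mul_le _ _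
        _ ≤ (‖(p : R)‖ * ‖A‖) * ‖φ η‖ := by
            exact mul_le_mul_of_nonneg_right (norm_mul_le _ _) (norm_nonneg _)
        _ ≤ (1 / p * 1) * ‖η‖ := by
            have h0 : (0:ℝ) ≤ 1 / p := by positivity
            exact mul_le_mul (mul_le_mul hp.le hA (norm_nonneg _) h0) hφη
              (norm_nonneg _) (by positivity)
        _ = (1 / p) * ‖η‖ := by ring
    have h2 : ‖ξ * (η * u)‖ ≤ max ((1 / p) * ‖η‖) 1 := by
      calc ‖ξ * (η * u)‖ = ‖φ u * P‖ := by rw [e1]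
        _ ≤ ‖φ u‖ * ‖P‖ := norm_mul_le _ _
        _ ≤ 1 * ‖P‖ := mul_le_mul_of_nonneg_right hφu (norm_nonneg _)
        _ = ‖P‖ := one_mul _
        _ ≤ max ‖(p : R) * A * φ η‖ ‖C‖ := hna _ _
        _ ≤ max ((1 / p) * ‖η‖) 1 := max_le_max hpA hC
    have hfin : ‖η‖ ≤ max ((1 / p) * ‖η‖) 1 := le_trans h1 h2
    have hplt : (1 : ℝ) / p < 1 := by
      have h2p : (2 : ℝ) ≤ p := by exact_mod_cast (Fact.out : p.Prime).two_le
      rw [div_lt_one (by linarith)]; linarith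
    rcases le_total ((1 / p) * ‖η‖) 1 with h | h
    · calc ‖η‖ ≤ max ((1 / p) * ‖η‖) 1 := hfin
        _ = 1 := max_eq_right h
    · have : ‖η‖ ≤ (1 / p) * ‖η‖ := le_trans hfin (le_of_eq (max_eq_left h))
      nlinarith [norm_nonneg η]
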